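/- With the recursive sets U_{α,m}, V_{α,m} as above, the symmetric difference satisfies U_{α,m} △ U_{α,m−1} = ⋃_{i=0}^{q_{n_m}−1} T_{α,m−1}^i(J'_{α,m}), and hence, since the tower floors are pairwise disjoint, λ(U_{α,m} △ U_{α,m−1}) = q_{n_m}‖q_{n_m}α‖, which lies strictly between 1/(a_{n_m+1}+2) and 1/a_{n_m+1}. -/

import Mathlib

open MeasureTheory
open scoped Classical symmDiff


open MeasureTheory
open scoped Classical

/-- `nrm r` is the distance from the real number `r` to the nearest integer. -/
noncomputable def nrm (r : ℝ) : ℝ := ‖((r : ℝ) : AddCircle (1:ℝ))‖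

/-- The interval `J^s_α = [0, 2∑_{k=1}^s ‖q_{n_k}α‖ mod 1)` in the circle. -/
noncomputable def Jas (α : ℝ) (q n : ℕ → ℕ) (s : ℕ) : Set (AddCircle (1:ℝ)) :=
  (fun t : ℝ => (t : AddCircle (1:ℝ))) ''
    Set.Ico 0 (Int.fract (2 * ∑ k ∈ Finset.Icc 1 s, nrm ((q (n k) : ℝ) * α)))

/-- The approximating skew product `T_{α,s}(x,j) = (x+α, j + χ_{J^s_α}(x+α))`
(for `s = 0` this is the rotation times the identity). -/
noncomputable def Tas (α : ℝ) (q n : ℕ → ℕ) (s : ℕ)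
    (p : AddCircle (1:ℝ) × ZMod 2) : AddCircle (1:ℝ) × ZMod 2 :=
  (p.1 + (α : AddCircle (1:ℝ)),
   p.2 + (if p.1 + (α : AddCircle (1:ℝ)) ∈ Jas α q n s then 1 else 0))

/-- `J'_{α,m} = [2∑_{s=0}^{m−1} q_{n_s}α, 2∑_{s=0}^{m−1} q_{n_s}α + q_{n_m}α) × ℤ₂`
(with the convention `q_{n_0} = 0`, and with the interval taken mod 1, of length
`‖q_{n_m}α‖`). -/
noncomputable def J'as (α : ℝ) (q n : ℕ → ℕ) (m : ℕ) :
    Set (AddCircle (1:ℝ) × ZMod 2) :=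
  ((fun t : ℝ => (t : AddCircle (1:ℝ))) ''
      Set.Ico (2 * ∑ s ∈ Finset.Icc 1 (m - 1), (q (n s) : ℝ) * α)
        (2 * ∑ s ∈ Finset.Icc 1 (m - 1), (q (n s) : ℝ) * α + nrm ((q (n m) : ℝ) * α))) ×ˢ
    (Set.univ : Set (ZMod 2))

/-- The tower `A_m = ⋃_{i=0}^{q_{n_m}−1} T_{α,m−1}^i(J'_{α,m})`. -/
noncomputable def Aas (α : ℝ) (q n : ℕ → ℕ) (m : ℕ) :
    Set (AddCircle (1:ℝ) × ZMod 2) :=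
  ⋃ i ∈ Finset.range (q (n m)), (Tas α q n (m - 1))^[i] '' J'as α q n m

/-- The recursively defined pair `(U_{α,m}, V_{α,m})`: starting from
`U_{α,0} = 𝕋×{0}`, `V_{α,0} = 𝕋×{1}`, and exchanging the parts lying in the tower `A_m`. -/
noncomputable def UVas (α : ℝ) (q n : ℕ → ℕ) :
    ℕ → Set (AddCircle (1:ℝ) × ZMod 2) × Set (AddCircle (1:ℝ) × ZMod 2)
  | 0 => ((Set.univ : Set (AddCircle (1:ℝ))) ×ˢ ({0} : Set (ZMod 2)),
          (Set.univ : Set (AddCircle (1:ℝ))) ×ˢ ({1} : Set (ZMod 2)))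
  | (m + 1) =>
      ((((UVas α q n m).1 \ Aas α q n (m + 1)) ∪ ((UVas α q n m).2 ∩ Aas α q n (m + 1))),
       (((UVas α q n m).2 \ Aas α q n (m + 1)) ∪ ((UVas α q n m).1 ∩ Aas α q n (m + 1))))

noncomputable def Uas (α : ℝ) (q n : ℕ → ℕ) (m : ℕ) : Set (AddCircle (1:ℝ) × ZMod 2) :=
  (UVas α q n m).1

noncomputable def Vas (α : ℝ) (q n : ℕ → ℕ) (m : ℕ) : Set (AddCircle (1:ℝ) × ZMod 2) :=
  (UVas α q n m).2

/-- Normalized Lebesgue measure `λ = λ' ⊗ (δ₀+δ₁)/2` on `𝕋 × ℤ₂`. -/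
noncomputable def lam2 : Measure (AddCircle (1:ℝ) × ZMod 2) :=
  (volume : Measure (AddCircle (1:ℝ))).prod
    ((2 : ENNReal)⁻¹ • (Measure.dirac (0 : ZMod 2) + Measure.dirac (1 : ZMod 2)))



namespace Stmt11
open GenContFract Set

lemma cf_not_term {α : ℝ} (hα : Irrational α) (N : ℕ) :
    ¬(GenContFract.of α).TerminatedAt N := by
  intro h
  obtain ⟨qq, hqq⟩ := (GenContFract.terminates_iff_rat α).mp ⟨N, h⟩
  exact hα ⟨qq, hqq.symm⟩

lemma irr_fract {x : ℝ} (hx : Irrational x) : Irrational (Int.fract x) := by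
  have := hx.sub_intCast ⌊x⌋
  rwa [Int.self_sub_floor] at this

lemma cf_stream {α : ℝ} (hα : Irrational α) (N : ℕ) :
    ∃ ifp, IntFractPair.stream α N = some ifp ∧ Irrational ifp.fr ∧
      0 < ifp.fr ∧ ifp.fr < 1 := by
  induction N with
  | zero =>
      have h1 : Irrational (Int.fract α) := irr_fract hα
      exact ⟨IntFractPair.of α, IntFractPair.stream_zero α, h1,
        lt_of_le_of_ne (Int.fract_nonneg α) (Ne.symm h1.ne_zero), Int.fract_lt_one α⟩
  | succ N ih =>
      obtain ⟨p, hp, hirr, hpos, _⟩ := ih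
      have h1 : Irrational (Int.fract p.fr⁻¹) := irr_fract hirr.inv
      exact ⟨IntFractPair.of p.fr⁻¹, IntFractPair.stream_succ_of_some hp hirr.ne_zero, h1,
        lt_of_le_of_ne (Int.fract_nonneg _) (Ne.symm h1.ne_zero), Int.fract_lt_one _⟩

/-- The auxiliary denominators are nonneg, and `contsAux (N+1)`-denominators are ≥ fib. -/
lemma fib_le_contsAux_b {α : ℝ} (hα : Irrational α) (N : ℕ) :
    (Nat.fib N : ℝ) ≤ ((GenContFract.of α).contsAux N).b := by
  exact fib_le_of_contsAux_b (Or.inr (cf_not_term hα _))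

/-- Big structural lemma at index `N`. -/
lemma cf_key {α : ℝ} (hα : Irrational α) (N : ℕ) :
    ∃ (fr : ℝ) (b : ℤ),
      Irrational fr ∧ 0 < fr ∧ fr < 1 ∧
      1 ≤ b ∧ (b : ℝ) < fr⁻¹ ∧ fr⁻¹ < b + 1 ∧
      ((GenContFract.of α).contsAux (N+2)).a
        = b * ((GenContFract.of α).contsAux (N+1)).a + ((GenContFract.of α).contsAux N).a ∧
      ((GenContFract.of α).contsAux (N+2)).b
        = b * ((GenContFract.of α).contsAux (N+1)).b + ((GenContFract.of α).contsAux N).b ∧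
      α - (GenContFract.of α).convs N =
        (-1)^N / (((GenContFract.of α).contsAux (N+1)).b *
          (fr⁻¹ * ((GenContFract.of α).contsAux (N+1)).b + ((GenContFract.of α).contsAux N).b)) := by
  obtain ⟨p, hp, hirr, hpos, hlt⟩ := cf_stream hα N
  set b : ℤ := ⌊p.fr⁻¹⌋ with hb
  have hinv1 : 1 < p.fr⁻¹ := (one_lt_inv_iff₀).mpr ⟨hpos, hlt⟩
  have hble : (b:ℝ) ≤ p.fr⁻¹ := Int.floor_le _
  have hbne : (b:ℝ) ≠ p.fr⁻¹ := fun h => (hirr.inv) ⟨(b:ℚ), by push_cast [← h]; norm_num⟩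
  have hblt : (b:ℝ) < p.fr⁻¹ := lt_of_le_of_ne hble hbne
  have hb1 : 1 ≤ b := by
    exact Int.le_floor.mpr (by exact_mod_cast hinv1.le)
  have hstream : IntFractPair.stream α (N+1) = some (IntFractPair.of p.fr⁻¹) :=
    IntFractPair.stream_succ_of_some hp hirr.ne_zero
  have hs : (GenContFract.of α).s.get? N = some ⟨1, ((IntFractPair.of p.fr⁻¹).b : ℝ)⟩ :=
    get?_of_eq_some_of_succ_get?_intFractPair_stream hstream
  have hofb : (IntFractPair.of p.fr⁻¹).b = b := rfl
  have hrec := contsAux_recurrence (g := GenContFract.of α) hs rfl rfl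
  have hsub := sub_convs_eq (v := α) hp
  simp only [hirr.ne_zero, if_false] at hsub
  refine ⟨p.fr, b, hirr, hpos, hlt, hb1, hblt, Int.lt_floor_add_one _, ?_, ?_, hsub⟩
  · rw [hrec, hofb]; push_cast; ring
  · rw [hrec, hofb]; push_cast; ring

noncomputable def QA (α : ℝ) (N : ℕ) : ℝ := ((GenContFract.of α).contsAux N).b
noncomputable def PA (α : ℝ) (N : ℕ) : ℝ := ((GenContFract.of α).contsAux N).a
noncomputable def eps (α : ℝ) (N : ℕ) : ℝ := QA α (N+1) * α - PA α (N+1)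

lemma QA_fib {α : ℝ} (hα : Irrational α) (N : ℕ) : (Nat.fib N : ℝ) ≤ QA α N :=
  fib_le_contsAux_b hα N

lemma QA_pos {α : ℝ} (hα : Irrational α) (N : ℕ) : 0 < QA α (N+1) := by
  have := QA_fib hα (N+1)
  have h2 : (1:ℝ) ≤ (Nat.fib (N+1) : ℝ) := by
    exact_mod_cast Nat.fib_pos.mpr (Nat.succ_pos N)
  linarith

lemma QA_nonneg {α : ℝ} (hα : Irrational α) (N : ℕ) : 0 ≤ QA α N := by
  rcases N with _ | N
  · simp [QA, zeroth_contAux_eq_one_zero]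
  · exact (QA_pos hα N).le

lemma QA_two_le {α : ℝ} (hα : Irrational α) (N : ℕ) : (2:ℝ) ≤ QA α (N+3) := by
  have := QA_fib hα (N+3)
  have h2 : (2:ℕ) ≤ Nat.fib (N+3) := by
    have : Nat.fib 3 ≤ Nat.fib (N+3) := Nat.fib_mono (by omega)
    exact le_trans (by decide : 2 ≤ Nat.fib 3) this
  have : (2:ℝ) ≤ (Nat.fib (N+3):ℝ) := by exact_mod_cast h2
  linarith

lemma cf_num_int {α : ℝ} (hα : Irrational α) (N : ℕ) : ∃ z : ℤ, PA α N = (z:ℝ) := by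
  have key : ∀ N, (∃ z : ℤ, PA α N = (z:ℝ)) ∧ (∃ z : ℤ, PA α (N+1) = (z:ℝ)) := by
    intro N
    induction N with
    | zero =>
        constructor
        · exact ⟨1, by simp [PA, zeroth_contAux_eq_one_zero]⟩
        · refine ⟨⌊α⌋, ?_⟩
          have h1 : ((GenContFract.of α).contsAux 1).a = (GenContFract.of α).h :=
            congrArg Pair.a (first_contAux_eq_h_one (g := GenContFract.of α))
          rw [PA, h1, GenContFract.of_h_eq_floor]
    | succ M ih =>
        refine ⟨ih.2, ?_⟩
        obtain ⟨fr, b, _, _, _, _, _, _, hA, _, _⟩ := cf_key hα M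
        obtain ⟨z0, hz0⟩ := ih.1
        obtain ⟨z1, hz1⟩ := ih.2
        exact ⟨b * z1 + z0, by rw [PA, hA, ← PA, ← PA, hz0, hz1]; push_cast; ring⟩
  exact (key N).1

lemma cf_err {α : ℝ} (hα : Irrational α) (N : ℕ) :
    0 < (-1)^N * eps α N ∧
    1/(QA α (N+1) + QA α (N+2)) < |eps α N| ∧ |eps α N| < 1/QA α (N+2) := by
  obtain ⟨fr, b, hirr, hfr0, hfr1, hb1, hblt, hbgt, hA, hB, hsub⟩ := cf_key hα N
  set D : ℝ := fr⁻¹ * QA α (N+1) + QA α N with hD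
  have hQ1 : 0 < QA α (N+1) := QA_pos hα N
  have hQ0 : 0 ≤ QA α N := QA_nonneg hα N
  have hQ2 : 0 < QA α (N+2) := QA_pos hα (N+1)
  have hB' : QA α (N+2) = (b:ℝ) * QA α (N+1) + QA α N := hB
  have hD_lb : QA α (N+2) < D := by
    have : (b:ℝ) * QA α (N+1) < fr⁻¹ * QA α (N+1) := mul_lt_mul_of_pos_right hblt hQ1
    rw [hD, hB']; linarith
  have hD_ub : D < QA α (N+2) + QA α (N+1) := by
    have : fr⁻¹ * QA α (N+1) < ((b:ℝ)+1) * QA α (N+1) := mul_lt_mul_of_pos_right hbgt hQ1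
    rw [hD, hB']; linarith
  have hDpos : 0 < D := lt_trans hQ2 hD_lb
  -- convs N = PA (N+1) / QA (N+1)
  have hconv : (GenContFract.of α).convs N = PA α (N+1) / QA α (N+1) := by
    rw [conv_eq_conts_a_div_conts_b, nth_cont_eq_succ_nth_contAux]; rfl
  have heps : eps α N = (-1)^N / D := by
    have h1 : α - PA α (N+1) / QA α (N+1) = (-1)^N / (QA α (N+1) * D) := by
      rw [← hconv]
      simpa [QA, hD] using hsub
    have h2 : eps α N = QA α (N+1) * (α - PA α (N+1) / QA α (N+1)) := by
      rw [eps, mul_sub, mul_div_assoc', mul_div_cancel_left₀ _ hQ1.ne']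
    rw [h2, h1]
    field_simp
  have habs : |eps α N| = 1/D := by
    rw [heps, abs_div, abs_pow, abs_neg, abs_one, one_pow, abs_of_pos hDpos]
  refine ⟨?_, ?_, ?_⟩
  · have hsq : ((-1:ℝ)^N) * ((-1:ℝ)^N) = 1 := by
      rw [← pow_add]
      exact Even.neg_one_pow ⟨N, rfl⟩
    rw [heps, mul_div_assoc', hsq]
    positivity
  · rw [habs]
    apply one_div_lt_one_div_of_lt hDpos
    linarith
  · rw [habs]
    exact one_div_lt_one_div_of_lt hQ2 hD_lb

lemma eps_ne {α : ℝ} (hα : Irrational α) (N : ℕ) : eps α N ≠ 0 := by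
  intro h
  have := (cf_err hα N).1
  rw [h] at this; simp at this

lemma eps_decr {α : ℝ} (hα : Irrational α) (N : ℕ) : |eps α (N+1)| ≤ |eps α N| := by
  obtain ⟨fr, b, _, _, _, hb1, _, _, _, hB, _⟩ := cf_key hα (N+1)
  have h1 := (cf_err hα N).2.1
  have h2 := (cf_err hα (N+1)).2.2
  have hQ1 : 0 < QA α (N+1) := QA_pos hα N
  have hQ2 : 0 < QA α (N+2) := QA_pos hα (N+1)
  have hrec : QA α (N+1) + QA α (N+2) ≤ QA α (N+3) := by
    have hbb : (1:ℝ) ≤ (b:ℝ) := by exact_mod_cast hb1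
    have : (1:ℝ) * QA α (N+2) ≤ (b:ℝ) * QA α (N+2) :=
      mul_le_mul_of_nonneg_right hbb hQ2.le
    have hB' : QA α (N+3) = (b:ℝ) * QA α (N+2) + QA α (N+1) := hB
    rw [hB']; linarith
  have : 1/(QA α (N+3)) ≤ 1/(QA α (N+1) + QA α (N+2)) := by
    apply one_div_le_one_div_of_le (by linarith) hrec
  linarith

lemma cf_det {α : ℝ} (hα : Irrational α) (N : ℕ) :
    PA α N * QA α (N+1) - QA α N * PA α (N+1) = (-1)^N := by
  have hyp : N = 0 ∨ ¬(GenContFract.of α).TerminatedAt (N - 1) := by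
    rcases N with _ | N
    · exact Or.inl rfl
    · exact Or.inr (cf_not_term hα N)
  rcases N with _ | N
  · simp [PA, QA, zeroth_contAux_eq_one_zero, first_contAux_eq_h_one]
  · exact (SimpContFract.of α).determinant (cf_not_term hα N)

lemma abs_le_abs_add {a b : ℝ} (h : 0 ≤ a * b) : |b| ≤ |a + b| := by
  rcases le_or_gt 0 a with ha | ha <;> rcases le_or_gt 0 b with hb | hb
  · rw [abs_of_nonneg hb, abs_of_nonneg (by linarith)]; linarith
  · have : a = 0 := by nlinarith
    subst this; simp
  · have : b = 0 := by nlinarith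
    subst this; simp
  · rw [abs_of_neg hb, abs_of_nonpos (by linarith)]; linarith

/-- Best approximation: if `0 < k < q_{M+1}` then `|k α - l| ≥ |eps (M+1)|`. -/
lemma cf_best {α : ℝ} (hα : Irrational α) (M : ℕ) (qm qN : ℕ) (pm pN : ℤ)
    (hqm : (qm:ℝ) = QA α (M+1)) (hqN : (qN:ℝ) = QA α (M+2))
    (hpm : (pm:ℝ) = PA α (M+1)) (hpN : (pN:ℝ) = PA α (M+2))
    (k : ℕ) (l : ℤ) (hk0 : 0 < k) (hkq : k < qN) :
    |eps α (M+1)| ≤ |(k:ℝ) * α - l| := by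
  obtain ⟨e, hee, hdet⟩ : ∃ e : ℤ, e * e = 1 ∧ pm * (qN:ℤ) - (qm:ℤ) * pN = e := by
    refine ⟨(-1)^(M+1), ?_, ?_⟩
    · rw [← pow_add]; exact Even.neg_one_pow ⟨M+1, by ring⟩
    · have hdetR : (pm:ℝ) * qN - (qm:ℝ) * pN = (-1:ℝ)^(M+1) := by
        rw [hpm, hqN, hqm, hpN]
        exact cf_det hα (M+1)
      have : ((pm * (qN:ℤ) - (qm:ℤ) * pN : ℤ) : ℝ) = (((-1:ℤ)^(M+1) : ℤ) : ℝ) := by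
        push_cast
        convert hdetR using 2
      exact_mod_cast this
  obtain ⟨x, hx⟩ : ∃ x : ℤ, x = -e * (pN * k - qN * l) := ⟨_, rfl⟩
  obtain ⟨y, hy⟩ : ∃ y : ℤ, y = -e * (qm * l - pm * k) := ⟨_, rfl⟩
  have heq1 : x * qm + y * qN = k := by
    rw [hx, hy]
    linear_combination (e * (k:ℤ)) * hdet + (k:ℤ) * hee
  have heq2 : x * pm + y * pN = l := by
    rw [hx, hy]
    linear_combination (e * (l:ℤ)) * hdet + (l:ℤ) * hee
  -- real versions
  have heq1R : (x:ℝ) * qm + (y:ℝ) * qN = k := by exact_mod_cast heq1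
  have heq2R : (x:ℝ) * pm + (y:ℝ) * pN = l := by exact_mod_cast heq2
  have hdecomp : (k:ℝ) * α - l = (x:ℝ) * eps α M + (y:ℝ) * eps α (M+1) := by
    have hm : eps α M = (qm:ℝ) * α - pm := by rw [eps, ← hqm, ← hpm]
    have hN : eps α (M+1) = (qN:ℝ) * α - pN := by rw [eps, ← hqN, ← hpN]
    rw [hm, hN]
    linear_combination (-α) * heq1R + heq2R
  rw [hdecomp]
  have hsm := (cf_err hα M).1
  have hsN := (cf_err hα (M+1)).1
  have h0 : ((-1:ℝ)^M) * ((-1:ℝ)^M) = 1 := by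
    rw [← pow_add]; exact Even.neg_one_pow ⟨M, rfl⟩
  have hprod : eps α M * eps α (M+1) < 0 := by
    have h2 := mul_pos hsm hsN
    have h3 : ((-1:ℝ)^M * eps α M) * ((-1:ℝ)^(M+1) * eps α (M+1))
        = -(((-1:ℝ)^M * (-1:ℝ)^M) * (eps α M * eps α (M+1))) := by
      rw [pow_succ]; ring
    rw [h3, h0, one_mul] at h2
    linarith
  have hkZ : (0:ℤ) < (k:ℤ) := by exact_mod_cast hk0
  have hkqZ : (k:ℤ) < (qN:ℤ) := by exact_mod_cast hkq
  have hqmZ : (0:ℤ) ≤ (qm:ℤ) := Int.ofNat_nonneg qm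
  have hqNZ : (0:ℤ) ≤ (qN:ℤ) := Int.ofNat_nonneg qN
  rcases eq_or_ne y 0 with hy0 | hy0
  · have hx0 : x ≠ 0 := by
      rintro rfl
      rw [hy0] at heq1; simp at heq1; omega
    have hxabs : (1:ℝ) ≤ |(x:ℝ)| := by
      have : (1:ℤ) ≤ |x| := Int.one_le_abs hx0
      calc (1:ℝ) ≤ ((|x|:ℤ):ℝ) := by exact_mod_cast this
      _ = |(x:ℝ)| := by push_cast; rfl
    calc |eps α (M+1)| ≤ |eps α M| := eps_decr hα M
    _ ≤ |(x:ℝ)| * |eps α M| := le_mul_of_one_le_left (abs_nonneg _) hxabs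
    _ = |(x:ℝ) * eps α M + (y:ℝ) * eps α (M+1)| := by
        rw [hy0]; push_cast; rw [zero_mul, add_zero, abs_mul]
  rcases eq_or_ne x 0 with hx0 | hx0
  · have hyabs : (1:ℝ) ≤ |(y:ℝ)| := by
      have : (1:ℤ) ≤ |y| := Int.one_le_abs hy0
      calc (1:ℝ) ≤ ((|y|:ℤ):ℝ) := by exact_mod_cast this
      _ = |(y:ℝ)| := by push_cast; rfl
    calc |eps α (M+1)| ≤ |(y:ℝ)| * |eps α (M+1)| :=
        le_mul_of_one_le_left (abs_nonneg _) hyabs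
    _ = |(x:ℝ) * eps α M + (y:ℝ) * eps α (M+1)| := by
        rw [hx0]; push_cast; rw [zero_mul, zero_add, abs_mul]
  -- both nonzero: x and y have opposite signs
  have hxy : x * y < 0 := by
    rcases hx0.lt_or_gt with hx1 | hx1 <;> rcases hy0.lt_or_gt with hy1 | hy1
    · exfalso
      have h1 : x * qm ≤ 0 := mul_nonpos_of_nonpos_of_nonneg hx1.le hqmZ
      have h2 : y * qN ≤ -qN := by nlinarith
      omega
    · exact mul_neg_of_neg_of_pos hx1 hy1
    · exact mul_neg_of_pos_of_neg hx1 hy1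
    · exfalso
      have h1 : 0 ≤ x * qm := mul_nonneg hx1.le hqmZ
      have h2 : (qN:ℤ) ≤ y * qN := by nlinarith
      omega
  have hxyR : (x:ℝ) * y < 0 := by exact_mod_cast hxy
  have hsame : 0 ≤ ((x:ℝ) * eps α M) * ((y:ℝ) * eps α (M+1)) := by
    have h4 : 0 ≤ ((x:ℝ) * y) * (eps α M * eps α (M+1)) :=
      (mul_pos_of_neg_of_neg hxyR hprod).le
    nlinarith [h4]
  have hyabs : (1:ℝ) ≤ |(y:ℝ)| := by
    have : (1:ℤ) ≤ |y| := Int.one_le_abs hy0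
    calc (1:ℝ) ≤ ((|y|:ℤ):ℝ) := by exact_mod_cast this
    _ = |(y:ℝ)| := by push_cast; rfl
  calc |eps α (M+1)| ≤ |(y:ℝ)| * |eps α (M+1)| :=
      le_mul_of_one_le_left (abs_nonneg _) hyabs
  _ = |(y:ℝ) * eps α (M+1)| := (abs_mul _ _).symm
  _ ≤ |(x:ℝ) * eps α M + (y:ℝ) * eps α (M+1)| := abs_le_abs_add hsame

instance fact01 : Fact ((0:ℝ) < 1) := ⟨one_pos⟩

noncomputable def arc (c ℓ : ℝ) : Set (AddCircle (1:ℝ)) :=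
  (fun t : ℝ => (t : AddCircle (1:ℝ))) '' Set.Ico c (c + ℓ)

lemma nrm_round (r : ℝ) : nrm r = |r - round r| := by
  rw [nrm, AddCircle.norm_eq]
  norm_num

lemma nrm_le (r : ℝ) (z : ℤ) : nrm r ≤ |r - z| := by
  rw [nrm_round]; exact round_le r z

lemma nrm_eq_abs {r : ℝ} {z : ℤ} (h : |r - z| < 1/2) : nrm r = |r - z| := by
  have hround : round r = z := by
    by_contra hne
    have h1 : |r - round r| ≤ |r - z| := round_le r z
    have h2 : (1:ℤ) ≤ |round r - z| := Int.one_le_abs (sub_ne_zero.mpr hne)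
    have h2R : (1:ℝ) ≤ |(round r : ℝ) - z| := by exact_mod_cast h2
    have h3 : |(round r:ℝ) - (z:ℝ)| ≤ |(round r:ℝ) - r| + |r - z| := abs_sub_le _ r _
    have h4 : |(round r:ℝ) - r| = |r - round r| := abs_sub_comm _ _
    linarith
  rw [nrm_round, hround]

lemma coe_int_eq_zero (n : ℤ) : (((n:ℝ)) : AddCircle (1:ℝ)) = 0 :=
  (AddCircle.coe_eq_zero_iff (1:ℝ)).mpr ⟨n, by simp⟩

lemma mem_arc {c ℓ : ℝ} (hℓ : ℓ ≤ 1) (x : ℝ) :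
    ((x : AddCircle (1:ℝ)) ∈ arc c ℓ) ↔ Int.fract (x - c) < ℓ := by
  constructor
  · rintro ⟨y, ⟨hy1, hy2⟩, hxy⟩
    have hxy' : ((y:ℝ) : AddCircle (1:ℝ)) = ((x:ℝ) : AddCircle (1:ℝ)) := hxy
    have h0 : ((x - y : ℝ) : AddCircle (1:ℝ)) = 0 := by
      rw [AddCircle.coe_sub, hxy', sub_self]
    obtain ⟨n, hn⟩ := (AddCircle.coe_eq_zero_iff (1:ℝ)).mp h0
    have hxn : x = y + n := by
      have : (n:ℝ) = x - y := by simpa using hn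
      linarith
    have : Int.fract (x - c) = y - c := by
      rw [hxn]
      have : y + (n:ℝ) - c = (y - c) + n := by ring
      rw [this, Int.fract_add_intCast, Int.fract_eq_self.mpr ⟨by linarith, by linarith⟩]
    rw [this]; linarith
  · intro h
    refine ⟨c + Int.fract (x - c), ⟨by simp [Int.fract_nonneg], by linarith⟩, ?_⟩
    have key : x - (c + Int.fract (x - c)) = ((⌊x - c⌋ : ℤ) : ℝ) := by
      rw [Int.fract]; push_cast; ring
    have h0 : ((x - (c + Int.fract (x - c)) : ℝ) : AddCircle (1:ℝ)) = 0 := by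
      rw [key]; exact coe_int_eq_zero _
    rw [AddCircle.coe_sub, sub_eq_zero] at h0
    exact h0.symm

lemma arc_eq_preimage {c ℓ : ℝ} (hℓ : ℓ ≤ 1) :
    arc c ℓ = (fun y : AddCircle (1:ℝ) => ((AddCircle.equivIco 1 c y : ℝ))) ⁻¹' Set.Iio (c + ℓ) := by
  ext y
  induction y using QuotientAddGroup.induction_on with
  | H x =>
    have hrep : AddCircle.equivIco 1 c ((x : ℝ) : AddCircle (1:ℝ))
        = ⟨toIcoMod Real.zero_lt_one c x, toIcoMod_mem_Ico _ c _⟩ :=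
      QuotientAddGroup.equivIcoMod_coe _ _ _
    set r := toIcoMod Real.zero_lt_one c x with hr
    have hrIco : r ∈ Set.Ico c (c + 1) := toIcoMod_mem_Ico _ c _
    have hrx : ((r : ℝ) : AddCircle (1:ℝ)) = ((x : ℝ) : AddCircle (1:ℝ)) := by
      have : r = x - toIcoDiv Real.zero_lt_one c x • (1:ℝ) := rfl
      rw [this, zsmul_eq_mul, mul_one]
      rw [AddCircle.coe_sub]
      rw [coe_int_eq_zero, sub_zero]
    simp only [Set.mem_preimage, hrep, Set.mem_Iio]
    rw [← hrx, mem_arc hℓ]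
    have hfr : Int.fract (r - c) = r - c :=
      Int.fract_eq_self.mpr ⟨by linarith [hrIco.1], by linarith [hrIco.2]⟩
    rw [hfr]
    constructor <;> intro h <;> [skip; skip] <;> linarith

lemma arc_measurable {c ℓ : ℝ} (hℓ : ℓ ≤ 1) : MeasurableSet (arc c ℓ) := by
  rw [arc_eq_preimage hℓ]
  have hm : Measurable fun y : AddCircle (1:ℝ) => ((AddCircle.equivIco 1 c y : ℝ)) :=
    measurable_subtype_coe.comp (AddCircle.measurableEquivIco 1 c).measurable
  exact hm measurableSet_Iio

lemma arc_volume {c ℓ : ℝ} (h0 : 0 < ℓ) (h1 : ℓ ≤ 1) :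
    volume (arc c ℓ) = ENNReal.ofReal ℓ := by
  have hmeas := arc_measurable (c := c) h1
  have hmp := AddCircle.measurePreserving_mk (T := 1) c
  have key := hmp.measure_preimage hmeas.nullMeasurableSet
  have hpre : MeasurableSet ((fun t : ℝ => (t : AddCircle (1:ℝ))) ⁻¹' arc c ℓ) :=
    AddCircle.measurable_mk' hmeas
  rw [Measure.restrict_apply hpre] at key
  have hset : (fun t : ℝ => (t : AddCircle (1:ℝ))) ⁻¹' arc c ℓ ∩ Set.Ioc c (c + 1)
      = Set.Ioo c (c + ℓ) ∪ {c + 1} := by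
    ext x
    simp only [Set.mem_inter_iff, Set.mem_preimage, Set.mem_Ioc, Set.mem_union,
      Set.mem_Ioo, Set.mem_singleton_iff]
    rw [mem_arc h1]
    constructor
    · rintro ⟨hfr, hx1, hx2⟩
      rcases eq_or_lt_of_le hx2 with heq | hlt
      · right; exact heq
      · left
        have : Int.fract (x - c) = x - c :=
          Int.fract_eq_self.mpr ⟨by linarith, by linarith⟩
        rw [this] at hfr
        exact ⟨hx1, by linarith⟩
    · rintro (⟨hx1, hx2⟩ | rfl)
      · have : Int.fract (x - c) = x - c :=
          Int.fract_eq_self.mpr ⟨by linarith, by linarith⟩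
        rw [this]
        exact ⟨by linarith, hx1, by linarith⟩
      · have h2 : c + 1 - c = (1:ℝ) := by ring
        rw [h2, Int.fract_one]
        exact ⟨h0, by linarith, le_refl _⟩
  have hu : volume (Set.Ioo c (c+ℓ) ∪ {c+1}) = volume (Set.Ioo c (c+ℓ)) := by
    apply le_antisymm
    · simpa using measure_union_le (μ := (volume : Measure ℝ)) (Set.Ioo c (c+ℓ)) ({c+1} : Set ℝ)
    · exact measure_mono Set.subset_union_left
  rw [hset, hu] at key
  rw [← key, Real.volume_Ioo]
  congr 1
  ring

lemma nrm_le_abs (r : ℝ) : nrm r ≤ |r| := by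
  simpa using nrm_le r 0

lemma arc_add (c ℓ a : ℝ) :
    (fun z : AddCircle (1:ℝ) => z + ((a : ℝ) : AddCircle (1:ℝ))) '' arc c ℓ
      = arc (c + a) ℓ := by
  rw [arc, arc, ← Set.image_comp]
  have hcomp : ((fun z : AddCircle (1:ℝ) => z + ((a:ℝ):AddCircle (1:ℝ)))
        ∘ fun t : ℝ => (t : AddCircle (1:ℝ)))
      = (fun t : ℝ => (t : AddCircle (1:ℝ))) ∘ (fun t : ℝ => t + a) := by
    funext t
    show (t : AddCircle (1:ℝ)) + ((a:ℝ) : AddCircle (1:ℝ)) = ((t + a : ℝ) : AddCircle (1:ℝ))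
    rw [AddCircle.coe_add]
  rw [hcomp, Set.image_comp]
  congr 1
  rw [Set.image_add_const_Ico]
  congr 1
  ring

lemma arc_disjoint {c₁ c₂ ℓ : ℝ} (hℓ1 : ℓ ≤ 1)
    (h : ℓ ≤ nrm (c₁ - c₂)) : Disjoint (arc c₁ ℓ) (arc c₂ ℓ) := by
  rw [Set.disjoint_left]
  intro y hy1 hy2
  induction y using QuotientAddGroup.induction_on with
  | H x =>
    rw [mem_arc hℓ1] at hy1 hy2
    have hf1 : 0 ≤ Int.fract (x - c₁) := Int.fract_nonneg _
    have hf2 : 0 ≤ Int.fract (x - c₂) := Int.fract_nonneg _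
    have hd : (c₁ - c₂) - ((⌊x - c₂⌋ - ⌊x - c₁⌋ : ℤ) : ℝ)
        = Int.fract (x - c₂) - Int.fract (x - c₁) := by
      rw [Int.fract, Int.fract]
      push_cast
      ring
    have := nrm_le (c₁ - c₂) (⌊x - c₂⌋ - ⌊x - c₁⌋)
    rw [hd] at this
    have habs : |Int.fract (x - c₂) - Int.fract (x - c₁)| < ℓ := by
      rw [abs_sub_lt_iff]
      constructor <;> linarith
    linarith

/- UV set algebra -/
lemma UVas_snd (α : ℝ) (q n : ℕ → ℕ) (m : ℕ) :
    (UVas α q n m).2 = ((UVas α q n m).1)ᶜ := by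
  induction m with
  | zero =>
      show (Set.univ ×ˢ ({1} : Set (ZMod 2))) = (Set.univ ×ˢ ({0} : Set (ZMod 2)))ᶜ
      ext ⟨x, j⟩
      simp only [Set.mem_prod, Set.mem_univ, true_and, Set.mem_singleton_iff,
        Set.mem_compl_iff]
      revert j; decide
  | succ m ih =>
      show ((UVas α q n m).2 \ _) ∪ ((UVas α q n m).1 ∩ _)
          = (((UVas α q n m).1 \ _) ∪ ((UVas α q n m).2 ∩ _))ᶜ
      rw [ih]
      ext p
      by_cases hU : p ∈ (UVas α q n m).1 <;> by_cases hA : p ∈ Aas α q n (m+1) <;>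
        simp [hU, hA]

lemma symmDiff_exchange {X : Type*} (U A : Set X) :
    (((U \ A) ∪ (Uᶜ ∩ A)) ∆ U) = A := by
  ext p
  by_cases hU : p ∈ U <;> by_cases hA : p ∈ A <;>
    simp [Set.mem_symmDiff, hU, hA]

lemma Uas_symmDiff (α : ℝ) (q n : ℕ → ℕ) (m : ℕ) :
    (Uas α q n (m + 1)) ∆ (Uas α q n m) = Aas α q n (m + 1) := by
  have h1 : Uas α q n (m+1)
      = (Uas α q n m \ Aas α q n (m+1)) ∪ ((Uas α q n m)ᶜ ∩ Aas α q n (m+1)) := by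
    show ((UVas α q n m).1 \ _) ∪ ((UVas α q n m).2 ∩ _) = _
    rw [UVas_snd]
    rfl
  rw [h1, symmDiff_exchange]

/- Tas image lemmas -/
lemma Tas_image (α : ℝ) (q n : ℕ → ℕ) (s : ℕ) (S : Set (AddCircle (1:ℝ))) :
    Tas α q n s '' (S ×ˢ (Set.univ : Set (ZMod 2)))
      = ((fun z : AddCircle (1:ℝ) => z + ((α:ℝ) : AddCircle (1:ℝ))) '' S) ×ˢ
          (Set.univ : Set (ZMod 2)) := by
  ext ⟨y, j⟩
  constructor
  · rintro ⟨⟨x, k⟩, ⟨hx, -⟩, heq⟩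
    have h1 : x + ((α:ℝ) : AddCircle (1:ℝ)) = y := congrArg Prod.fst heq
    exact ⟨⟨x, hx, h1⟩, trivial⟩
  · rintro ⟨⟨x, hx, hxy⟩, -⟩
    refine ⟨(x, j - (if y ∈ Jas α q n s then 1 else 0)), ⟨hx, trivial⟩, ?_⟩
    show (x + _, _) = (y, j)
    have hxy' : x + ((α:ℝ) : AddCircle (1:ℝ)) = y := hxy
    rw [hxy']
    exact Prod.ext rfl (sub_add_cancel _ _)

lemma Tas_iter_arc (α : ℝ) (q n : ℕ → ℕ) (s : ℕ) (c ℓ : ℝ) (i : ℕ) :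
    (Tas α q n s)^[i] '' (arc c ℓ ×ˢ (Set.univ : Set (ZMod 2)))
      = arc (c + i * α) ℓ ×ˢ (Set.univ : Set (ZMod 2)) := by
  induction i with
  | zero => simp
  | succ i ih =>
      rw [Function.iterate_succ', Set.image_comp, ih, Tas_image, arc_add]
      congr 2
      push_cast
      ring

/- lam2 lemmas -/
lemma nu_univ : ((2 : ENNReal)⁻¹ • (Measure.dirac (0 : ZMod 2) + Measure.dirac (1 : ZMod 2)))
    (Set.univ : Set (ZMod 2)) = 1 := by
  rw [Measure.smul_apply, Measure.add_apply]
  simp only [measure_univ]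
  rw [smul_eq_mul]
  norm_num
  exact ENNReal.inv_mul_cancel (by norm_num) (by norm_num)

lemma lam2_prod (S : Set (AddCircle (1:ℝ))) :
    lam2 (S ×ˢ (Set.univ : Set (ZMod 2))) = volume S := by
  haveI : IsFiniteMeasure
      ((2 : ENNReal)⁻¹ • (Measure.dirac (0 : ZMod 2) + Measure.dirac (1 : ZMod 2))) := by
    constructor
    rw [nu_univ]
    exact ENNReal.one_lt_top
  rw [lam2, Measure.prod_prod, nu_univ, mul_one]


lemma nrm_neg (r : ℝ) : nrm (-r) = nrm r := by
  rw [nrm, nrm, AddCircle.coe_neg, norm_neg]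

lemma QA_lt {α : ℝ} (hα : Irrational α) (j : ℕ) (hj : 1 ≤ j) :
    QA α (j+1) + 1 ≤ QA α (j+2) := by
  obtain ⟨fr, b, _, _, _, hb1, _, _, _, hB, _⟩ := cf_key hα j
  have hB' : QA α (j+2) = (b:ℝ) * QA α (j+1) + QA α j := hB
  have h1 : (1:ℝ) ≤ QA α j := by
    have h2 := QA_fib hα j
    have h3 : (1:ℝ) ≤ (Nat.fib j : ℝ) := by exact_mod_cast Nat.fib_pos.mpr (by omega)
    linarith
  have hbR : (1:ℝ) ≤ (b:ℝ) := by exact_mod_cast hb1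
  have hQ1 : 0 < QA α (j+1) := QA_pos hα j
  nlinarith

end Stmt11

/- STATEMENT 11: U_{α,m} △ U_{α,m−1} = ⋃_{i<q_{n_m}} T_{α,m−1}^i(J'_{α,m}), and
λ(U_{α,m} △ U_{α,m−1}) = q_{n_m}‖q_{n_m}α‖ ∈ (1/(a_{n_m+1}+2), 1/a_{n_m+1}). -/
theorem stmt11 (α : ℝ) (hα : Irrational α) (q a : ℕ → ℕ)
    (hq : ∀ m, ((q m : ℝ)) = (GenContFract.of α).dens m)
    (hq0 : q 0 = 1) (hq1 : q 1 = a 1)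
    (hrec : ∀ m, q (m + 2) = a (m + 2) * q (m + 1) + q m)
    (n : ℕ → ℕ) (hmono : StrictMono n) (heven : ∀ k, Even (n k)) :
    ∀ m : ℕ,
      (Uas α q n (m + 1)) ∆ (Uas α q n m) = Aas α q n (m + 1) ∧
      lam2 ((Uas α q n (m + 1)) ∆ (Uas α q n m)) =
        ENNReal.ofReal ((q (n (m + 1)) : ℝ) * nrm ((q (n (m + 1)) : ℝ) * α)) ∧
      1 / ((a (n (m + 1) + 1) : ℝ) + 2) <
        (q (n (m + 1)) : ℝ) * nrm ((q (n (m + 1)) : ℝ) * α) ∧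
      (q (n (m + 1)) : ℝ) * nrm ((q (n (m + 1)) : ℝ) * α) <
        1 / (a (n (m + 1) + 1) : ℝ) := by
  intro m
  set N := n (m + 1) with hN
  have hN2 : 2 ≤ N := by
    have h1 : n 0 < n (m+1) := hmono (Nat.succ_pos m)
    obtain ⟨t, ht⟩ := heven (m+1)
    omega
  obtain ⟨M, hM⟩ : ∃ M, N = M + 1 := ⟨N - 1, by omega⟩
  have hM1 : 1 ≤ M := by omega
  have hqQ : ∀ j, (q j : ℝ) = Stmt11.QA α (j+1) := by
    intro j
    rw [hq j, GenContFract.den_eq_conts_b, GenContFract.nth_cont_eq_succ_nth_contAux]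
    rfl
  obtain ⟨pN, hpN⟩ := Stmt11.cf_num_int hα (N+1)
  have hqNpos : (0:ℝ) < (q N : ℝ) := by rw [hqQ]; exact Stmt11.QA_pos hα N
  have hqN1pos : (0:ℝ) < (q (N+1) : ℝ) := by rw [hqQ]; exact Stmt11.QA_pos hα (N+1)
  have hepsN : Stmt11.eps α N = (q N : ℝ) * α - (pN : ℝ) := by
    have h1 : Stmt11.eps α N = Stmt11.QA α (N+1) * α - Stmt11.PA α (N+1) := rfl
    rw [h1, ← hqQ N, hpN]
  have herr := Stmt11.cf_err hα N
  have hQA2 : (2:ℝ) ≤ Stmt11.QA α (N+2) := by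
    have h := Stmt11.QA_two_le hα (N-1)
    have hidx : N - 1 + 3 = N + 2 := by omega
    rwa [hidx] at h
  have habs_half : |Stmt11.eps α N| < 1/2 := by
    have h2 := herr.2.2
    have h3 : 1 / Stmt11.QA α (N+2) ≤ 1/2 :=
      one_div_le_one_div_of_le (by norm_num) hQA2
    linarith
  have habs' : |(q N:ℝ)*α - (pN:ℝ)| < 1/2 := by rw [← hepsN]; exact habs_half
  have hnrm : nrm ((q N : ℝ) * α) = |Stmt11.eps α N| := by
    rw [Stmt11.nrm_eq_abs habs', hepsN]
  have hl_pos : 0 < nrm ((q N:ℝ)*α) := by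
    rw [hnrm]; exact abs_pos.mpr (Stmt11.eps_ne hα N)
  have hl_le1 : nrm ((q N:ℝ)*α) ≤ 1 := by rw [hnrm]; linarith
  -- recurrence over ℕ, cast to ℝ
  have hrecN : (q (N+1) : ℝ) = (a (N+1) : ℝ) * (q N : ℝ) + (q (N-1) : ℝ) := by
    have h := hrec (N-1)
    rw [show N-1+2 = N+1 by omega, show N-1+1 = N by omega] at h
    exact_mod_cast h
  have hqm_lt : (q (N-1) : ℝ) < (q N : ℝ) := by
    have h := Stmt11.QA_lt hα (N-1) (by omega)
    rw [show N-1+1 = N by omega, show N-1+2 = N+1 by omega] at h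
    rw [hqQ (N-1), hqQ N, show N-1+1 = N by omega]
    linarith
  have hqN_lt : (q N : ℝ) < (q (N+1) : ℝ) := by
    have h := Stmt11.QA_lt hα N (by omega)
    rw [hqQ N, hqQ (N+1)]
    linarith
  have haN1 : 1 ≤ a (N+1) := by
    by_contra hcon
    have ha0 : a (N+1) = 0 := by omega
    rw [ha0] at hrecN
    norm_num at hrecN
    have : (q (N+1):ℝ) = (q (N-1):ℝ) := by exact_mod_cast hrecN
    linarith
  have hpart1 := Stmt11.Uas_symmDiff α q n m
  refine ⟨hpart1, ?_, ?_, ?_⟩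
  · -- measure computation
    rw [hpart1]
    simp only [Aas]
    rw [← hN]
    have hJ : J'as α q n (m+1)
        = Stmt11.arc (2 * ∑ s ∈ Finset.Icc 1 m, (q (n s) : ℝ) * α)
            (nrm ((q N:ℝ)*α)) ×ˢ (Set.univ : Set (ZMod 2)) := rfl
    set c : ℝ := 2 * ∑ s ∈ Finset.Icc 1 m, (q (n s) : ℝ) * α with hc
    have hA : (⋃ i ∈ Finset.range (q N), (Tas α q n (m+1-1))^[i] '' J'as α q n (m+1))
        = ⋃ i ∈ Finset.range (q N),
            (Stmt11.arc (c + (i:ℝ)*α) (nrm ((q N:ℝ)*α)) ×ˢ (Set.univ : Set (ZMod 2))) := by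
      apply Set.iUnion₂_congr
      intro i hi
      rw [hJ, Stmt11.Tas_iter_arc]
    rw [hA]
    -- pairwise disjoint arcs
    have harcs : ∀ i j : ℕ, i < j → j < q N →
        nrm ((q N:ℝ)*α) ≤ nrm ((c + (i:ℝ)*α) - (c + (j:ℝ)*α)) := by
      intro i j hij hjq
      have hk0 : 0 < j - i := by omega
      have hkq : j - i < q N := by omega
      have hdiff : (c + (i:ℝ)*α) - (c + (j:ℝ)*α) = -(((j - i : ℕ):ℝ)*α) := by
        push_cast [Nat.cast_sub hij.le]
        ring
      rw [hdiff, Stmt11.nrm_neg]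
      obtain ⟨pm, hpm⟩ := Stmt11.cf_num_int hα N
      obtain ⟨pN2, hpN2⟩ := Stmt11.cf_num_int hα (N+1)
      have hbest := Stmt11.cf_best hα M (q M) (q N) pm pN2
        (hqQ M)
        (by rw [hqQ N, hM])
        (by rw [← hpm, hM])
        (by rw [← hpN2, hM])
        (j - i) (round (((j - i : ℕ):ℝ)*α)) hk0 hkq
      rw [hnrm, Stmt11.nrm_round, hM]
      exact hbest
    have hdisj : ((Finset.range (q N) : Finset ℕ) : Set ℕ).PairwiseDisjoint
        (fun i => Stmt11.arc (c + (i:ℝ)*α) (nrm ((q N:ℝ)*α)) ×ˢ (Set.univ : Set (ZMod 2))) := by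
      intro i hi j hj hij
      simp only [Finset.coe_range, Set.mem_Iio] at hi hj
      have harc : Disjoint (Stmt11.arc (c + (i:ℝ)*α) (nrm ((q N:ℝ)*α)))
          (Stmt11.arc (c + (j:ℝ)*α) (nrm ((q N:ℝ)*α))) := by
        rcases lt_or_gt_of_ne hij with h | h
        · exact Stmt11.arc_disjoint hl_le1 (harcs i j h hj)
        · exact (Stmt11.arc_disjoint hl_le1 (harcs j i h hi)).symm
      refine Set.disjoint_left.mpr ?_
      rintro ⟨z, k⟩ ⟨hz, -⟩ ⟨hz', -⟩
      exact Set.disjoint_left.mp harc hz hz'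
    have hmeas : ∀ i ∈ Finset.range (q N),
        MeasurableSet ((fun i : ℕ => Stmt11.arc (c + (i:ℝ)*α) (nrm ((q N:ℝ)*α)) ×ˢ
          (Set.univ : Set (ZMod 2))) i) := by
      intro i hi
      exact (Stmt11.arc_measurable hl_le1).prod MeasurableSet.univ
    rw [measure_biUnion_finset hdisj hmeas]
    have hone : ∀ i ∈ Finset.range (q N),
        lam2 (Stmt11.arc (c + (i:ℝ)*α) (nrm ((q N:ℝ)*α)) ×ˢ (Set.univ : Set (ZMod 2)))
          = ENNReal.ofReal (nrm ((q N:ℝ)*α)) := by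
      intro i hi
      rw [Stmt11.lam2_prod, Stmt11.arc_volume hl_pos hl_le1]
    rw [Finset.sum_congr rfl hone, Finset.sum_const, Finset.card_range]
    rw [ENNReal.ofReal_mul (Nat.cast_nonneg _), ENNReal.ofReal_natCast, nsmul_eq_mul]
  · -- lower bound
    have hlow : 1/((q N:ℝ) + (q (N+1):ℝ)) < nrm ((q N:ℝ)*α) := by
      rw [hnrm, hqQ N, hqQ (N+1)]
      exact herr.2.1
    have haR : (1:ℝ) ≤ (a (N+1):ℝ) := by exact_mod_cast haN1
    have hsum_pos : (0:ℝ) < (q N:ℝ) + (q (N+1):ℝ) := by linarith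
    have hstep : 1/((a (N+1):ℝ)+2) ≤ (q N:ℝ) * (1/((q N:ℝ) + (q (N+1):ℝ))) := by
      rw [mul_one_div, div_le_div_iff₀ (by linarith) hsum_pos]
      nlinarith
    calc 1/((a (N+1):ℝ)+2) ≤ (q N:ℝ) * (1/((q N:ℝ) + (q (N+1):ℝ))) := hstep
    _ < (q N:ℝ) * nrm ((q N:ℝ)*α) := mul_lt_mul_of_pos_left hlow hqNpos
  · -- upper bound
    have hhigh : nrm ((q N:ℝ)*α) < 1/(q (N+1):ℝ) := by
      rw [hnrm, hqQ (N+1)]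
      exact herr.2.2
    have haR : (1:ℝ) ≤ (a (N+1):ℝ) := by exact_mod_cast haN1
    have hqm0 : (0:ℝ) ≤ (q (N-1):ℝ) := Nat.cast_nonneg _
    calc (q N:ℝ) * nrm ((q N:ℝ)*α) < (q N:ℝ) * (1/(q (N+1):ℝ)) :=
        mul_lt_mul_of_pos_left hhigh hqNpos
    _ ≤ 1/(a (N+1):ℝ) := by
        rw [mul_one_div, div_le_div_iff₀ hqN1pos (by linarith)]
        nlinarith
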